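/- The measure on [0,1]^2 with density 1/(x + y - xy)^2 is invariant under Ito's natural extension map ℱ of the Farey tent map, where ℱ(x,y) = (x/(1-x), y/(1+y)) for x ≤ 1/2 and ℱ(x,y) = ((1-x)/x, 1/(1+y)) for x > 1/2. -/

import Mathlib

open MeasureTheory

noncomputable section

/-- Ito's natural extension map of the Farey tent map on `Ω = [0,1]²`. -/
def Fbar (p : ℝ × ℝ) : ℝ × ℝ :=
  if p.1 ≤ 1 / 2 then (p.1 / (1 - p.1), p.2 / (1 + p.2))
  else ((1 - p.1) / p.1, 1 / (1 + p.2))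

/-- The measure on `[0,1]²` with density `1/(x + y - xy)²`. -/
def muBar : Measure (ℝ × ℝ) :=
  (volume.restrict (Set.Icc (0 : ℝ) 1 ×ˢ Set.Icc (0 : ℝ) 1)).withDensity fun p =>
    ENNReal.ofReal (1 / (p.1 + p.2 - p.1 * p.2) ^ 2)

/-! ### Auxiliary definitions -/

def hden (p : ℝ × ℝ) : ENNReal := ENNReal.ofReal (1 / (p.1 + p.2 - p.1 * p.2) ^ 2)

def T1 (p : ℝ × ℝ) : ℝ × ℝ := (p.1 / (1 - p.1), p.2 / (1 + p.2))

def T2 (p : ℝ × ℝ) : ℝ × ℝ := ((1 - p.1) / p.1, 1 / (1 + p.2))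

def OmSet : Set (ℝ × ℝ) := Set.Icc (0 : ℝ) 1 ×ˢ Set.Icc (0 : ℝ) 1

def S1 : Set (ℝ × ℝ) := Set.Icc (0 : ℝ) (1/2) ×ˢ Set.Icc (0 : ℝ) 1

def S2 : Set (ℝ × ℝ) := Set.Ioc (1/2 : ℝ) 1 ×ˢ Set.Icc (0 : ℝ) 1

def R1 : Set (ℝ × ℝ) := Set.Icc (0 : ℝ) 1 ×ˢ Set.Icc (0 : ℝ) (1/2)

def R2 : Set (ℝ × ℝ) := Set.Ico (0 : ℝ) 1 ×ˢ Set.Icc (1/2 : ℝ) 1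

def LL (a b : ℝ) : ℝ × ℝ →L[ℝ] ℝ × ℝ :=
  (a • ContinuousLinearMap.fst ℝ ℝ ℝ).prod (b • ContinuousLinearMap.snd ℝ ℝ ℝ)

lemma LL_det (a b : ℝ) : (LL a b).det = a * b := by
  rw [ContinuousLinearMap.det, ← LinearMap.det_toMatrix (Module.Basis.finTwoProd ℝ)]
  rw [Matrix.det_fin_two]
  simp [LL, LinearMap.toMatrix_apply, Module.Basis.finTwoProd]

lemma aux_div (a b c : ℝ) (ha : a ≠ 0) (hb : b ≠ 0) :
    1/a * (1/b) * (a*b/c) = 1/c := by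
  rw [show 1/a * (1/b) * (a*b/c) = a*b/(a*b) * (1/c) by ring]
  rw [div_self (mul_ne_zero ha hb), one_mul]

lemma hasFDerivAt_T1 (p : ℝ × ℝ) (h1 : p.1 ≠ 1) (h2 : (1:ℝ) + p.2 ≠ 0) :
    HasFDerivAt T1 (LL (1/(1-p.1)^2) (1/(1+p.2)^2)) p := by
  have hx : (1:ℝ) - p.1 ≠ 0 := sub_ne_zero.2 (Ne.symm h1)
  have d1 : HasDerivAt (fun x : ℝ => x / (1 - x)) (1/(1-p.1)^2) p.1 := by
    have := (hasDerivAt_id p.1).div ((hasDerivAt_id p.1).const_sub 1) hx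
    refine this.congr_deriv ?_; simp only [id]
    field_simp; ring
  have d2 : HasDerivAt (fun y : ℝ => y / (1 + y)) (1/(1+p.2)^2) p.2 := by
    have := (hasDerivAt_id p.2).div ((hasDerivAt_id p.2).const_add 1) h2
    refine this.congr_deriv ?_; simp only [id]
    field_simp; ring
  exact (d1.comp_hasFDerivAt p hasFDerivAt_fst).prodMk
    (d2.comp_hasFDerivAt p hasFDerivAt_snd)

lemma hasFDerivAt_T2 (p : ℝ × ℝ) (h1 : p.1 ≠ 0) (h2 : (1:ℝ) + p.2 ≠ 0) :
    HasFDerivAt T2 (LL (-(1/p.1^2)) (-(1/(1+p.2)^2))) p := by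
  have d1 : HasDerivAt (fun x : ℝ => (1 - x) / x) (-(1/p.1^2)) p.1 := by
    have := ((hasDerivAt_id p.1).const_sub 1).div (hasDerivAt_id p.1) h1
    refine this.congr_deriv ?_; simp only [id]
    field_simp
    ring
  have d2 : HasDerivAt (fun y : ℝ => 1 / (1 + y)) (-(1/(1+p.2)^2)) p.2 := by
    have := (hasDerivAt_const p.2 (1:ℝ)).div ((hasDerivAt_id p.2).const_add 1) h2
    refine this.congr_deriv ?_; simp only [id]
    field_simp; ring
  exact (d1.comp_hasFDerivAt p hasFDerivAt_fst).prodMk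
    (d2.comp_hasFDerivAt p hasFDerivAt_snd)

lemma key1 (p : ℝ × ℝ) (hp : p ∈ S1) :
    ENNReal.ofReal |(LL (1/(1-p.1)^2) (1/(1+p.2)^2)).det| * hden (T1 p) = hden p := by
  obtain ⟨⟨hx0, hx2⟩, hy0, hy1⟩ := hp
  have hx1 : (0:ℝ) < 1 - p.1 := by linarith
  have hy2 : (0:ℝ) < 1 + p.2 := by linarith
  rw [LL_det, abs_of_pos (by positivity)]
  simp only [hden, T1]
  rw [← ENNReal.ofReal_mul (by positivity)]
  congr 1
  have key : p.1/(1-p.1) + p.2/(1+p.2) - p.1/(1-p.1) * (p.2/(1+p.2))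
      = (p.1 + p.2 - p.1*p.2) / ((1-p.1)*(1+p.2)) := by
    field_simp
    ring
  rw [key, div_pow, one_div_div, mul_pow]
  exact aux_div _ _ _ (by positivity) (by positivity)

lemma key2 (p : ℝ × ℝ) (hp : p ∈ S2) :
    ENNReal.ofReal |(LL (-(1/p.1^2)) (-(1/(1+p.2)^2))).det| * hden (T2 p) = hden p := by
  obtain ⟨⟨hx0, hx2⟩, hy0, hy1⟩ := hp
  have hx1 : (0:ℝ) < p.1 := by linarith
  have hy2 : (0:ℝ) < 1 + p.2 := by linarith
  rw [LL_det, show (-(1/p.1^2)) * (-(1/(1+p.2)^2)) = 1/p.1^2 * (1/(1+p.2)^2) by ring,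
    abs_of_pos (by positivity)]
  simp only [hden, T2]
  rw [← ENNReal.ofReal_mul (by positivity)]
  congr 1
  have key : (1-p.1)/p.1 + 1/(1+p.2) - (1-p.1)/p.1 * (1/(1+p.2))
      = (p.1 + p.2 - p.1*p.2) / (p.1*(1+p.2)) := by
    field_simp
    ring
  rw [key, div_pow, one_div_div, mul_pow]
  exact aux_div _ _ _ (by positivity) (by positivity)

lemma injOn_T1 : Set.InjOn T1 S1 := by
  rintro p ⟨⟨hp0, hp2⟩, hp3, hp4⟩ q ⟨⟨hq0, hq2⟩, hq3, hq4⟩ h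
  have hpn : (1:ℝ) - p.1 ≠ 0 := by norm_num; linarith
  have hqn : (1:ℝ) - q.1 ≠ 0 := by norm_num; linarith
  have hpm : (1:ℝ) + p.2 ≠ 0 := by positivity
  have hqm : (1:ℝ) + q.2 ≠ 0 := by positivity
  have h1 : p.1 / (1 - p.1) = q.1 / (1 - q.1) := congrArg Prod.fst h
  have h2 : p.2 / (1 + p.2) = q.2 / (1 + q.2) := congrArg Prod.snd h
  rw [div_eq_div_iff hpn hqn] at h1
  rw [div_eq_div_iff hpm hqm] at h2
  exact Prod.ext (by linear_combination h1) (by linear_combination h2)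

lemma injOn_T2 : Set.InjOn T2 S2 := by
  rintro p ⟨⟨hp0, hp2⟩, hp3, hp4⟩ q ⟨⟨hq0, hq2⟩, hq3, hq4⟩ h
  have hpn : p.1 ≠ 0 := by positivity
  have hqn : q.1 ≠ 0 := by positivity
  have hpm : (1:ℝ) + p.2 ≠ 0 := by positivity
  have hqm : (1:ℝ) + q.2 ≠ 0 := by positivity
  have h1 : (1 - p.1) / p.1 = (1 - q.1) / q.1 := congrArg Prod.fst h
  have h2 : 1 / (1 + p.2) = 1 / (1 + q.2) := congrArg Prod.snd h
  rw [div_eq_div_iff hpn hqn] at h1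
  rw [div_eq_div_iff hpm hqm] at h2
  exact Prod.ext (by linear_combination -h1) (by linear_combination -h2)

lemma img1 (E : Set (ℝ × ℝ)) (hE1 : E ⊆ OmSet) :
    T1 '' (T1 ⁻¹' E ∩ S1) = E ∩ R1 := by
  ext q
  constructor
  · rintro ⟨p, ⟨hpE, ⟨hx0, hx2⟩, hy0, hy1⟩, rfl⟩
    have hx1 : (0:ℝ) < 1 - p.1 := by linarith
    have hy2 : (0:ℝ) < 1 + p.2 := by linarith
    refine ⟨hpE, ⟨div_nonneg hx0 hx1.le, ?_⟩, div_nonneg hy0 hy2.le, ?_⟩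
    · show p.1 / (1 - p.1) ≤ 1
      rw [div_le_one hx1]; linarith
    · show p.2 / (1 + p.2) ≤ 1/2
      rw [div_le_iff₀ hy2]; linarith
  · rintro ⟨hqE, ⟨hu0, hu1⟩, hv0, hv1⟩
    have h1u : (0:ℝ) < 1 + q.1 := by linarith
    have h1v : (0:ℝ) < 1 - q.2 := by linarith
    have hTeq : T1 (q.1/(1+q.1), q.2/(1-q.2)) = q := by
      have e1 : (q.1/(1+q.1)) / (1 - q.1/(1+q.1)) = q.1 := by
        rw [show (1:ℝ) - q.1/(1+q.1) = 1/(1+q.1) by field_simp; ring]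
        field_simp
      have e2 : (q.2/(1-q.2)) / (1 + q.2/(1-q.2)) = q.2 := by
        rw [show (1:ℝ) + q.2/(1-q.2) = 1/(1-q.2) by field_simp; ring]
        field_simp
      exact Prod.ext e1 e2
    refine ⟨(q.1/(1+q.1), q.2/(1-q.2)), ⟨?_, ⟨div_nonneg hu0 h1u.le, ?_⟩,
      div_nonneg hv0 h1v.le, ?_⟩, hTeq⟩
    · show T1 _ ∈ E
      rw [hTeq]; exact hqE
    · show q.1 / (1 + q.1) ≤ 1/2
      rw [div_le_iff₀ h1u]; linarith
    · show q.2 / (1 - q.2) ≤ 1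
      rw [div_le_one h1v]; linarith

lemma img2 (E : Set (ℝ × ℝ)) (hE1 : E ⊆ OmSet) :
    T2 '' (T2 ⁻¹' E ∩ S2) = E ∩ R2 := by
  ext q
  constructor
  · rintro ⟨p, ⟨hpE, ⟨hx0, hx2⟩, hy0, hy1⟩, rfl⟩
    have hx1 : (0:ℝ) < p.1 := by linarith
    have hy2 : (0:ℝ) < 1 + p.2 := by linarith
    refine ⟨hpE, ⟨div_nonneg (by linarith) hx1.le, ?_⟩, ?_, ?_⟩
    · show (1 - p.1) / p.1 < 1
      rw [div_lt_one hx1]; linarith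
    · show 1/2 ≤ 1 / (1 + p.2)
      rw [le_div_iff₀ hy2]; linarith
    · show 1 / (1 + p.2) ≤ 1
      rw [div_le_one hy2]; linarith
  · rintro ⟨hqE, ⟨hu0, hu1⟩, hv0, hv1⟩
    have h1u : (0:ℝ) < 1 + q.1 := by linarith
    have h1v : (0:ℝ) < q.2 := by linarith
    have hTeq : T2 (1/(1+q.1), (1-q.2)/q.2) = q := by
      have e1 : (1 - 1/(1+q.1)) / (1/(1+q.1)) = q.1 := by
        rw [show (1:ℝ) - 1/(1+q.1) = q.1/(1+q.1) by field_simp; ring]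
        field_simp
      have e2 : 1 / (1 + (1-q.2)/q.2) = q.2 := by
        rw [show (1:ℝ) + (1-q.2)/q.2 = 1/q.2 by field_simp; ring]
        field_simp
      exact Prod.ext e1 e2
    refine ⟨(1/(1+q.1), (1-q.2)/q.2), ⟨?_, ⟨?_, ?_⟩,
      div_nonneg (by linarith) h1v.le, ?_⟩, hTeq⟩
    · show T2 _ ∈ E
      rw [hTeq]; exact hqE
    · show 1/2 < 1 / (1 + q.1)
      rw [lt_div_iff₀ h1u]; linarith
    · show 1 / (1 + q.1) ≤ 1
      rw [div_le_one h1u]; linarith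
    · show (1 - q.2) / q.2 ≤ 1
      rw [div_le_one h1v]; linarith

lemma cov1 (s : Set (ℝ × ℝ)) (hs : MeasurableSet s) (hsub : s ⊆ S1) :
    ∫⁻ p in T1 '' s, hden p = ∫⁻ p in s, hden p := by
  rw [lintegral_image_eq_lintegral_abs_det_fderiv_mul volume hs
    (f' := fun p => LL (1/(1-p.1)^2) (1/(1+p.2)^2))
    (fun p hp => by
      obtain ⟨⟨hx0, hx2⟩, hy0, hy1⟩ := hsub hp
      exact (hasFDerivAt_T1 p (by norm_num; linarith) (by positivity)).hasFDerivWithinAt)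
    (injOn_T1.mono hsub) hden]
  exact setLIntegral_congr_fun hs (fun p hp => key1 p (hsub hp))

lemma cov2 (s : Set (ℝ × ℝ)) (hs : MeasurableSet s) (hsub : s ⊆ S2) :
    ∫⁻ p in T2 '' s, hden p = ∫⁻ p in s, hden p := by
  rw [lintegral_image_eq_lintegral_abs_det_fderiv_mul volume hs
    (f' := fun p => LL (-(1/p.1^2)) (-(1/(1+p.2)^2)))
    (fun p hp => by
      obtain ⟨⟨hx0, hx2⟩, hy0, hy1⟩ := hsub hp
      exact (hasFDerivAt_T2 p (by positivity) (by positivity)).hasFDerivWithinAt)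
    (injOn_T2.mono hsub) hden]
  exact setLIntegral_congr_fun hs (fun p hp => key2 p (hsub hp))

lemma measurable_T1 : Measurable T1 :=
  (measurable_fst.div (measurable_const.sub measurable_fst)).prodMk
    (measurable_snd.div (measurable_const.add measurable_snd))

lemma measurable_T2 : Measurable T2 :=
  ((measurable_const.sub measurable_fst).div measurable_fst).prodMk
    (measurable_const.div (measurable_const.add measurable_snd))

lemma measurable_Fbar : Measurable Fbar := by
  have : Fbar = fun p : ℝ × ℝ => if p.1 ≤ 1/2 then T1 p else T2 p := rfl
  rw [this]
  exact Measurable.ite (measurableSet_le measurable_fst measurable_const)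
    measurable_T1 measurable_T2

lemma muBar_apply (S : Set (ℝ × ℝ)) (hS : MeasurableSet S) :
    muBar S = ∫⁻ p in S ∩ OmSet, hden p := by
  rw [muBar, withDensity_apply _ hS, Measure.restrict_restrict hS]
  rfl

lemma null_lines : (volume : Measure (ℝ × ℝ))
    (({1} ×ˢ Set.univ) ∪ (Set.univ ×ˢ {(1:ℝ)/2})) = 0 := by
  refine measure_union_null ?_ ?_ <;>
    · rw [Measure.volume_eq_prod, Measure.prod_prod]; simp

/-- The measure with density `1/(x+y-xy)²` on `[0,1]²` is invariant under Ito's natural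
extension map `ℱ` of the Farey tent map. -/
theorem stmt10 (E : Set (ℝ × ℝ)) (hE : MeasurableSet E)
    (hE1 : E ⊆ Set.Icc (0 : ℝ) 1 ×ˢ Set.Icc (0 : ℝ) 1) :
    muBar (Fbar ⁻¹' E) = muBar E := by
  have hE1' : E ⊆ OmSet := hE1
  have hpre : MeasurableSet (Fbar ⁻¹' E) := measurable_Fbar hE
  have hs1m : MeasurableSet (T1 ⁻¹' E ∩ S1) :=
    (measurable_T1 hE).inter ((measurableSet_Icc).prod measurableSet_Icc)
  have hs2m : MeasurableSet (T2 ⁻¹' E ∩ S2) :=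
    (measurable_T2 hE).inter ((measurableSet_Ioc).prod measurableSet_Icc)
  rw [muBar_apply _ hpre, muBar_apply _ hE]
  have hsplit : Fbar ⁻¹' E ∩ OmSet = (T1 ⁻¹' E ∩ S1) ∪ (T2 ⁻¹' E ∩ S2) := by
    ext p
    constructor
    · rintro ⟨hpE, hΩp⟩
      obtain ⟨⟨ha, hb⟩, hc, hd⟩ := hΩp
      rcases le_or_gt p.1 (1/2) with hc1 | hc1
      · left
        refine ⟨?_, ⟨ha, hc1⟩, hc, hd⟩
        have : Fbar p = T1 p := if_pos hc1
        rwa [Set.mem_preimage, ← this]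
      · right
        refine ⟨?_, ⟨hc1, hb⟩, hc, hd⟩
        have : Fbar p = T2 p := if_neg (not_le.2 hc1)
        rwa [Set.mem_preimage, ← this]
    · rintro (⟨hpE, ⟨ha, hb⟩, hc, hd⟩ | ⟨hpE, ⟨ha, hb⟩, hc, hd⟩)
      · have : Fbar p = T1 p := if_pos hb
        exact ⟨by rwa [Set.mem_preimage, this], ⟨ha, by linarith⟩, hc, hd⟩
      · have : Fbar p = T2 p := if_neg (not_le.2 ha)
        exact ⟨by rwa [Set.mem_preimage, this], ⟨by linarith, hb⟩, hc, hd⟩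
  have hdisj : Disjoint (T1 ⁻¹' E ∩ S1) (T2 ⁻¹' E ∩ S2) := by
    rw [Set.disjoint_left]
    rintro p ⟨-, ⟨-, hb⟩, -⟩ ⟨-, ⟨ha, -⟩, -⟩
    exact absurd hb (not_le.2 ha)
  rw [hsplit, lintegral_union hs2m hdisj]
  have e1 : ∫⁻ p in T1 ⁻¹' E ∩ S1, hden p = ∫⁻ p in E ∩ R1, hden p := by
    rw [← img1 E hE1', cov1 _ hs1m Set.inter_subset_right]
  have e2 : ∫⁻ p in T2 ⁻¹' E ∩ S2, hden p = ∫⁻ p in E ∩ R2, hden p := by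
    rw [← img2 E hE1', cov2 _ hs2m Set.inter_subset_right]
  rw [e1, e2, Set.inter_eq_left.2 hE1']
  have hR1m : MeasurableSet R1 := measurableSet_Icc.prod measurableSet_Icc
  rw [← lintegral_inter_add_diff hden E hR1m]
  congr 1
  refine setLIntegral_congr (measure_symmDiff_eq_zero_iff.1 (measure_mono_null ?_ null_lines))
  rintro p hp
  rw [Set.mem_symmDiff] at hp
  rcases hp with ⟨⟨hpE, ⟨hu0, hu1⟩, hv0, hv1⟩, hn⟩ | ⟨⟨hpE, hn1⟩, hn⟩
  · -- p ∈ E ∩ R2, p ∉ E \ R1 : hence p ∈ R1, so p.2 = 1/2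
    have hpR1 : p ∈ R1 := by
      by_contra hc
      exact hn ⟨hpE, hc⟩
    right
    obtain ⟨-, -, hw1⟩ := hpR1
    exact ⟨Set.mem_univ _, le_antisymm hw1 hv0⟩
  · -- p ∈ E \ R1, p ∉ E ∩ R2
    obtain ⟨⟨ha0, ha1⟩, hb0, hb1⟩ := hE1' hpE
    have hv : 1/2 < p.2 := by
      by_contra hc
      exact hn1 ⟨⟨ha0, ha1⟩, hb0, not_lt.1 hc⟩
    have hpnR2 : p ∉ R2 := fun h => hn ⟨hpE, h⟩
    have : ¬ p.1 < 1 := by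
      intro hlt
      exact hpnR2 ⟨⟨ha0, hlt⟩, hv.le, hb1⟩
    left
    exact ⟨le_antisymm ha1 (not_lt.1 this), Set.mem_univ _⟩

end
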